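/- Consequently, with the notation of the preceding statement, the matrices 2I + M⁻¹ + M − (I ± DC⁻¹)(I+M)(I ± DC⁻¹)ᵀ are positive semidefinite (both signs) if and only if (γ²I−P)(T−P)⁻¹(γ²I−P) ⪰ (I ± BKA⁻¹)(γ²I−P)(I ± BKA⁻¹)ᵀ for both signs. -/

import Mathlib

open Matrix

open scoped ComplexOrder in
noncomputable def Matrix.PosSemidef.sqrt {n : Type*} [Fintype n] [DecidableEq n] {𝕜 : Type*} [RCLike 𝕜]
    {A : Matrix n n 𝕜} (hA : A.PosSemidef) : Matrix n n 𝕜 :=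
  (hA.1.eigenvectorUnitary : Matrix n n 𝕜) * diagonal ((↑) ∘ (√·) ∘ hA.1.eigenvalues) *
    (star (hA.1.eigenvectorUnitary : Matrix n n 𝕜))

lemma sqrtR_mul_self {n : ℕ} {A : Matrix (Fin n) (Fin n) ℝ} (hA : A.PosSemidef) :
    hA.sqrt * hA.sqrt = A := by
  have hU : star (hA.1.eigenvectorUnitary : Matrix (Fin n) (Fin n) ℝ) *
      (hA.1.eigenvectorUnitary : Matrix (Fin n) (Fin n) ℝ) = 1 := Unitary.coe_star_mul_self _
  conv_rhs => rw [hA.1.spectral_theorem]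
  unfold PosSemidef.sqrt
  simp only [Unitary.conjStarAlgAut_apply]
  calc _ = (hA.1.eigenvectorUnitary : Matrix (Fin n) (Fin n) ℝ) *
        (diagonal (RCLike.ofReal ∘ (√·) ∘ hA.1.eigenvalues) * (star (hA.1.eigenvectorUnitary : Matrix (Fin n) (Fin n) ℝ) *
      (hA.1.eigenvectorUnitary : Matrix (Fin n) (Fin n) ℝ)) * diagonal (RCLike.ofReal ∘ (√·) ∘ hA.1.eigenvalues)) *
      star (hA.1.eigenvectorUnitary : Matrix (Fin n) (Fin n) ℝ) := by simp only [Matrix.mul_assoc]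
    _ = _ := by
      rw [hU, Matrix.mul_one, diagonal_mul_diagonal]
      congr 3
      funext i
      simp [Real.mul_self_sqrt (hA.eigenvalues_nonneg i)]

lemma sqrtR_symm {n : ℕ} {A : Matrix (Fin n) (Fin n) ℝ} (hA : A.PosSemidef) :
    hA.sqrtᵀ = hA.sqrt := by
  unfold PosSemidef.sqrt
  simp [transpose_mul, Matrix.mul_assoc, star_eq_conjTranspose]

lemma congPSD {n : ℕ} (S X : Matrix (Fin n) (Fin n) ℝ) (hS : IsUnit S.det) :
    (S * X * Sᵀ).PosSemidef ↔ X.PosSemidef := by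
  constructor
  · intro h
    have h2 := h.mul_mul_conjTranspose_same S⁻¹
    rw [conjTranspose_eq_transpose_of_trivial] at h2
    have e : S⁻¹ * (S * X * Sᵀ) * S⁻¹ᵀ = X := by
      rw [transpose_nonsing_inv]
      calc S⁻¹ * (S * X * Sᵀ) * Sᵀ⁻¹
          = (S⁻¹ * S) * X * (Sᵀ * Sᵀ⁻¹) := by noncomm_ring
        _ = X := by
            rw [nonsing_inv_mul _ hS, mul_nonsing_inv _ (by simpa using hS)]
            simp
    rwa [e] at h2
  · intro h
    have := h.mul_mul_conjTranspose_same S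
    rwa [conjTranspose_eq_transpose_of_trivial] at this

/-- Under the congruence of the preceding identity, positive semidefiniteness of
`2I+M⁻¹+M−(I±DC⁻¹)(I+M)(I±DC⁻¹)ᵀ` (both signs) is equivalent to
`(γ²I−P)(T−P)⁻¹(γ²I−P) ⪰ (I±BKA⁻¹)(γ²I−P)(I±BKA⁻¹)ᵀ` (both signs). -/
theorem stmt14 {n m : ℕ} (γ : ℝ) (hγ : 0 < γ)
    (T P A : Matrix (Fin n) (Fin n) ℝ) (hTs : T.IsSymm) (hPs : P.IsSymm)
    (hA : IsUnit A.det)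
    (B : Matrix (Fin n) (Fin m) ℝ) (K : Matrix (Fin m) (Fin n) ℝ)
    (hTP : (T - P).PosDef)
    (hγT : (γ ^ 2 • (1 : Matrix (Fin n) (Fin n) ℝ) - T).PosDef)
    (C D M : Matrix (Fin n) (Fin n) ℝ)
    (hC : C = (hγT.posSemidef.sqrt)⁻¹ * A)
    (hD : D = (hγT.posSemidef.sqrt)⁻¹ * (B * K))
    (hM : M = (hγT.posSemidef.sqrt)⁻¹ * (T - P) * (hγT.posSemidef.sqrt)⁻¹) :
    (∀ ε : ℝ, ε = 1 ∨ ε = -1 →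
      ((2 : ℝ) • (1 : Matrix (Fin n) (Fin n) ℝ) + M⁻¹ + M
        - (1 + ε • (D * C⁻¹)) * (1 + M) * (1 + ε • (D * C⁻¹))ᵀ).PosSemidef) ↔
    (∀ ε : ℝ, ε = 1 ∨ ε = -1 →
      ((γ ^ 2 • (1 : Matrix (Fin n) (Fin n) ℝ) - P) * (T - P)⁻¹ *
          (γ ^ 2 • (1 : Matrix (Fin n) (Fin n) ℝ) - P)
        - (1 + ε • (B * K * A⁻¹)) * (γ ^ 2 • (1 : Matrix (Fin n) (Fin n) ℝ) - P) *
            (1 + ε • (B * K * A⁻¹))ᵀ).PosSemidef) := by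
  set S : Matrix (Fin n) (Fin n) ℝ := hγT.posSemidef.sqrt with hSdef
  set Q : Matrix (Fin n) (Fin n) ℝ := T - P with hQdef
  set G : Matrix (Fin n) (Fin n) ℝ := γ ^ 2 • (1 : Matrix (Fin n) (Fin n) ℝ) - P with hGdef
  have hS2 : S * S = γ ^ 2 • (1 : Matrix (Fin n) (Fin n) ℝ) - T :=
    sqrtR_mul_self hγT.posSemidef
  have hSsym : Sᵀ = S := by
    exact sqrtR_symm hγT.posSemidef
  have hSdetU : IsUnit S.det := by
    have h1 : S.det * S.det = (γ ^ 2 • (1 : Matrix (Fin n) (Fin n) ℝ) - T).det := by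
      rw [← det_mul, hS2]
    have hpos := hγT.det_pos
    rw [← h1] at hpos
    exact isUnit_iff_ne_zero.mpr (fun h => by simp [h] at hpos)
  have hQdetU : IsUnit Q.det := isUnit_iff_ne_zero.mpr hTP.det_pos.ne'
  have hSl : S⁻¹ * S = 1 := nonsing_inv_mul _ hSdetU
  have hSr : S * S⁻¹ = 1 := mul_nonsing_inv _ hSdetU
  have hQl : Q⁻¹ * Q = 1 := nonsing_inv_mul _ hQdetU
  have hQr : Q * Q⁻¹ = 1 := mul_nonsing_inv _ hQdetU
  have hSG : S * S + Q = G := by rw [hS2, hQdef, hGdef]; abel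
  have hSit : S⁻¹ᵀ = S⁻¹ := by rw [transpose_nonsing_inv, hSsym]
  have hDC : D * C⁻¹ = S⁻¹ * (B * K * A⁻¹) * S := by
    rw [hD, hC, Matrix.mul_inv_rev, nonsing_inv_nonsing_inv _ hSdetU]
    noncomm_ring
  have h1M : 1 + M = S⁻¹ * G * S⁻¹ := by
    rw [← hSG, hM]
    calc (1 : Matrix (Fin n) (Fin n) ℝ) + S⁻¹ * Q * S⁻¹
        = S⁻¹ * S * (S * S⁻¹) + S⁻¹ * Q * S⁻¹ := by rw [hSl, hSr]; simp
      _ = S⁻¹ * (S * S + Q) * S⁻¹ := by noncomm_ring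
  have hMinv : M⁻¹ = S * Q⁻¹ * S := by
    rw [hM, Matrix.mul_inv_rev, Matrix.mul_inv_rev, nonsing_inv_nonsing_inv _ hSdetU,
      ← Matrix.mul_assoc]
  have key : ∀ ε : ℝ,
      (2 : ℝ) • (1 : Matrix (Fin n) (Fin n) ℝ) + M⁻¹ + M
        - (1 + ε • (D * C⁻¹)) * (1 + M) * (1 + ε • (D * C⁻¹))ᵀ
      = S⁻¹ * (G * Q⁻¹ * G
          - (1 + ε • (B * K * A⁻¹)) * G * (1 + ε • (B * K * A⁻¹))ᵀ) * S⁻¹ᵀ := by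
    intro ε
    set Z : Matrix (Fin n) (Fin n) ℝ := B * K * A⁻¹ with hZ
    have hsm : ε • (S⁻¹ * Z * S) = S⁻¹ * (ε • Z) * S := by
      simp [Matrix.smul_mul, Matrix.mul_smul]
    have hE : 1 + ε • (D * C⁻¹) = S⁻¹ * (1 + ε • Z) * S := by
      rw [hDC, hsm, Matrix.mul_add, Matrix.add_mul, Matrix.mul_one, hSl]
    have hEt : (1 + ε • (D * C⁻¹))ᵀ = S * (1 + ε • Z)ᵀ * S⁻¹ := by
      rw [hE, transpose_mul, transpose_mul, hSsym, hSit, Matrix.mul_assoc]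
    have h2 : (1 + ε • (D * C⁻¹)) * (1 + M) * (1 + ε • (D * C⁻¹))ᵀ
        = S⁻¹ * ((1 + ε • Z) * G * (1 + ε • Z)ᵀ) * S⁻¹ := by
      rw [hEt, hE, h1M]
      calc S⁻¹ * (1 + ε • Z) * S * (S⁻¹ * G * S⁻¹) * (S * (1 + ε • Z)ᵀ * S⁻¹)
          = S⁻¹ * (1 + ε • Z) * (S * S⁻¹) * G * (S⁻¹ * S) * (1 + ε • Z)ᵀ * S⁻¹ := by
            noncomm_ring
        _ = _ := by rw [hSr, hSl]; noncomm_ring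
    have e : S⁻¹ * ((S * S + Q) * Q⁻¹ * (S * S + Q)) * S⁻¹
        = (S⁻¹ * S) * (S * Q⁻¹ * S) * (S * S⁻¹)
          + (S⁻¹ * S) * (S * ((Q⁻¹ * Q) * S⁻¹))
          + S⁻¹ * ((Q * Q⁻¹) * (S * (S * S⁻¹)))
          + S⁻¹ * (Q * Q⁻¹) * Q * S⁻¹ := by noncomm_ring
    simp only [hQl, hQr, hSl, hSr, Matrix.mul_one, Matrix.one_mul] at e
    have h1 : (2 : ℝ) • (1 : Matrix (Fin n) (Fin n) ℝ) + M⁻¹ + M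
        = S⁻¹ * (G * Q⁻¹ * G) * S⁻¹ := by
      rw [hMinv, hM, ← hSG, e, two_smul ℝ (1 : Matrix (Fin n) (Fin n) ℝ)]
      abel
    rw [hSit, h2, h1]
    noncomm_ring
  have hSidetU : IsUnit S⁻¹.det := by
    rw [det_nonsing_inv]
    exact isUnit_ringInverse.mpr hSdetU
  constructor
  · intro h ε hε
    exact (congPSD S⁻¹ _ hSidetU).mp (by rw [← key ε]; exact h ε hε)
  · intro h ε hε
    rw [key ε]
    exact (congPSD S⁻¹ _ hSidetU).mpr (h ε hε)
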